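/- Let ρ, σ be positive definite n×n complex matrices and M a Hermitian matrix. Then the real function t ↦ tr((σ^{1/2}·(ρ+tM)·σ^{1/2})^{1/2}), defined for t in a neighborhood of 0 on which ρ+tM is positive definite, is differentiable at t = 0 with derivative (1/2)·tr(σ^{1/2}·(σ^{1/2}·ρ·σ^{1/2})^{-1/2}·σ^{1/2}·M). -/

import Mathlib

open Matrix
open scoped ComplexOrder

/-- The real power `A^t` of a Hermitian matrix, via the continuous functional calculus. -/
noncomputable def matPow {n : Type*} [Fintype n] [DecidableEq n]
    (A : Matrix n n ℂ) (t : ℝ) : Matrix n n ℂ :=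
  cfc (fun x : ℝ => x ^ t) A

section Aux

variable {n : Type*} [Fintype n] [DecidableEq n]

/-- Square root of a positive semidefinite matrix (replacement for the removed Mathlib API). -/
noncomputable def Matrix.PosSemidef.sqrt {A : Matrix n n ℂ} (hA : A.PosSemidef) : Matrix n n ℂ :=
  hA.1.cfc Real.sqrt

open scoped MatrixOrder in
lemma Matrix.PosSemidef.sqrt_eq_cfcSqrt {A : Matrix n n ℂ} (hA : A.PosSemidef) :
    hA.sqrt = CFC.sqrt A := by
  have h0 : 0 ≤ A := Matrix.nonneg_iff_posSemidef.mpr hA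
  rw [CFC.sqrt_eq_real_sqrt A h0, cfcₙ_eq_cfc, hA.1.cfc_eq]
  rfl

open scoped MatrixOrder in
lemma Matrix.PosSemidef.posSemidef_sqrt {A : Matrix n n ℂ} (hA : A.PosSemidef) :
    hA.sqrt.PosSemidef := by
  rw [hA.sqrt_eq_cfcSqrt]
  exact Matrix.nonneg_iff_posSemidef.mp (CFC.sqrt_nonneg A)

open scoped MatrixOrder in
lemma Matrix.PosSemidef.sqrt_mul_self {A : Matrix n n ℂ} (hA : A.PosSemidef) :
    hA.sqrt * hA.sqrt = A := by
  rw [hA.sqrt_eq_cfcSqrt]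
  exact CFC.sqrt_mul_sqrt_self A (Matrix.nonneg_iff_posSemidef.mpr hA)

open scoped MatrixOrder in
lemma Matrix.PosSemidef.eq_sqrt_of_sq_eq {B : Matrix n n ℂ} (hB : B.PosSemidef)
    {A : Matrix n n ℂ} (hA : A.PosSemidef) (h : B ^ 2 = A) : B = hA.sqrt := by
  rw [hA.sqrt_eq_cfcSqrt, ← h, CFC.sqrt_sq B (Matrix.nonneg_iff_posSemidef.mpr hB)]

omit [DecidableEq n] in
lemma herm_qf_real {A : Matrix n n ℂ} (hA : A.IsHermitian) (x : n → ℂ) :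
    star x ⬝ᵥ A *ᵥ x = ((star x ⬝ᵥ A *ᵥ x).re : ℂ) := by
  have h1 : star (star x ⬝ᵥ A *ᵥ x) = star x ⬝ᵥ A *ᵥ x := by
    conv_rhs => rw [star_dotProduct]
    congr 1
    rw [star_mulVec, dotProduct_mulVec, hA.eq]
  exact ((Complex.conj_eq_iff_re.mp h1).symm)

lemma herm_qf_spectral {A : Matrix n n ℂ} (hA : A.IsHermitian) (x : n → ℂ) :
    (star x ⬝ᵥ A *ᵥ x).re
      = ∑ i, hA.eigenvalues i *
          Complex.normSq (((star (hA.eigenvectorUnitary : Matrix n n ℂ)) *ᵥ x) i) := by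
  set U : Matrix n n ℂ := (hA.eigenvectorUnitary : Matrix n n ℂ) with hU
  set y : n → ℂ := (star U) *ᵥ x with hy
  have hsy : star y = star x ᵥ* U := by
    rw [hy, star_mulVec, star_eq_conjTranspose, conjTranspose_conjTranspose]
  have key : star x ⬝ᵥ A *ᵥ x = star y ⬝ᵥ (diagonal (RCLike.ofReal ∘ hA.eigenvalues)) *ᵥ y := by
    conv_lhs => rw [hA.spectral_theorem, Unitary.conjStarAlgAut_apply]
    rw [← hU, ← mulVec_mulVec, ← mulVec_mulVec, dotProduct_mulVec, ← hsy, hy]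
  rw [key]
  rw [dotProduct, Complex.re_sum]
  congr 1; funext i
  rw [mulVec_diagonal]
  simp only [Pi.star_apply, Function.comp_apply]
  rw [Complex.star_def, mul_left_comm, ← Complex.normSq_eq_conj_mul_self]
  simp [mul_comm]

omit [DecidableEq n] in
lemma self_dot_re (x : n → ℂ) : (star x ⬝ᵥ x).re = ∑ i, Complex.normSq (x i) := by
  rw [dotProduct, Complex.re_sum]
  congr 1; funext i
  simp only [Pi.star_apply]
  rw [Complex.star_def, ← Complex.normSq_eq_conj_mul_self]
  simp

lemma unitary_mulVec_normSq (U : Matrix n n ℂ) (hUmem : U ∈ Matrix.unitaryGroup n ℂ) (x : n → ℂ) :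
    (star ((star U) *ᵥ x) ⬝ᵥ ((star U) *ᵥ x)) = star x ⬝ᵥ x := by
  rw [star_mulVec, star_eq_conjTranspose, conjTranspose_conjTranspose, ← dotProduct_mulVec,
    mulVec_mulVec]
  rw [← star_eq_conjTranspose U, (Matrix.mem_unitaryGroup_iff.mp hUmem : U * star U = 1)]
  rw [one_mulVec]

lemma posdef_lower [Nonempty n] {A : Matrix n n ℂ} (hA : A.PosDef) :
    ∃ c > 0, ∀ x : n → ℂ, c * (star x ⬝ᵥ x).re ≤ (star x ⬝ᵥ A *ᵥ x).re := by
  refine ⟨Finset.univ.inf' Finset.univ_nonempty hA.1.eigenvalues, ?_, fun x => ?_⟩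
  · rw [gt_iff_lt, Finset.lt_inf'_iff]
    exact fun i _ => hA.eigenvalues_pos i
  · rw [herm_qf_spectral hA.1 x]
    have h2 : (star x ⬝ᵥ x).re
        = ∑ i, Complex.normSq (((star (hA.1.eigenvectorUnitary : Matrix n n ℂ)) *ᵥ x) i) := by
      rw [← self_dot_re, unitary_mulVec_normSq _ (hA.1.eigenvectorUnitary).2]
    rw [h2, Finset.mul_sum]
    refine Finset.sum_le_sum fun i _ => ?_
    exact mul_le_mul_of_nonneg_right (Finset.inf'_le _ (Finset.mem_univ i))
      (Complex.normSq_nonneg _)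

lemma contOn_spectrum (f : ℝ → ℝ) (A : Matrix n n ℂ) : ContinuousOn f (spectrum ℝ A) := by
  have : Finite (spectrum ℝ A) := A.finite_real_spectrum
  rw [continuousOn_iff_continuous_restrict]
  exact continuous_of_discreteTopology

lemma matPow_eq_sqrt {A : Matrix n n ℂ} (hA : A.PosSemidef) : matPow A (1/2) = hA.sqrt := by
  rw [matPow, show (fun x : ℝ => x ^ (1/2 : ℝ)) = Real.sqrt from
    funext fun x => (Real.sqrt_eq_rpow x).symm, hA.1.cfc_eq]
  rfl

lemma sqrt_posDef {A : Matrix n n ℂ} (hA : A.PosDef) : hA.posSemidef.sqrt.PosDef := by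
  have hsq := hA.posSemidef.posSemidef_sqrt
  refine Matrix.PosDef.of_dotProduct_mulVec_pos hsq.1 fun x hx => ?_
  refine lt_of_le_of_ne (hsq.dotProduct_mulVec_nonneg x) fun h0 => ?_
  have h1 : hA.posSemidef.sqrt *ᵥ x = 0 := (hsq.dotProduct_mulVec_zero_iff x).mp h0.symm
  have h2 : A *ᵥ x = 0 := by
    rw [← hA.posSemidef.sqrt_mul_self, ← mulVec_mulVec, h1, mulVec_zero]
  have := hA.dotProduct_mulVec_pos hx
  rw [h2, dotProduct_zero] at this
  exact lt_irrefl 0 this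

lemma mulVec_ne_zero {S : Matrix n n ℂ} (hS : S.PosDef) {x : n → ℂ} (hx : x ≠ 0) :
    S *ᵥ x ≠ 0 := by
  intro h
  apply hx
  have hdet : IsUnit S.det := isUnit_iff_ne_zero.mpr (ne_of_gt hS.det_pos)
  calc x = (S⁻¹ * S) *ᵥ x := by rw [Matrix.nonsing_inv_mul S hdet, one_mulVec]
  _ = S⁻¹ *ᵥ (S *ᵥ x) := (mulVec_mulVec _ _ _).symm
  _ = 0 := by rw [h, mulVec_zero]

lemma posdef_conj {S ρ : Matrix n n ℂ} (hS : S.PosDef) (hρ : ρ.PosDef) :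
    (S * ρ * S).PosDef := by
  have hH : (S * ρ * S).IsHermitian := by
    have := isHermitian_conjTranspose_mul_mul S hρ.1
    rwa [hS.1.eq] at this
  refine Matrix.PosDef.of_dotProduct_mulVec_pos hH fun x hx => ?_
  have := hρ.dotProduct_mulVec_pos (mulVec_ne_zero hS hx)
  calc (0:ℂ) < star (S *ᵥ x) ⬝ᵥ ρ *ᵥ (S *ᵥ x) := this
  _ = star x ⬝ᵥ (S * ρ * S) *ᵥ x := by
      rw [star_mulVec, ← dotProduct_mulVec, mulVec_mulVec, mulVec_mulVec, hS.1.eq]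

lemma spectrum_pos {A : Matrix n n ℂ} (hA : A.PosDef) {x : ℝ} (hx : x ∈ spectrum ℝ A) :
    0 < x := by
  rw [hA.1.spectrum_real_eq_range_eigenvalues] at hx
  obtain ⟨i, rfl⟩ := hx
  exact hA.eigenvalues_pos i

lemma matPow_neg_mul {A : Matrix n n ℂ} (hA : A.PosDef) :
    matPow A (-(1/2)) * matPow A (1/2) = 1 := by
  have hsa : IsSelfAdjoint A := hA.1
  rw [matPow, matPow, ← cfc_mul _ _ A (contOn_spectrum _ A) (contOn_spectrum _ A)]
  rw [cfc_congr (g := fun _ => (1:ℝ)) fun x hx => by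
    rw [← Real.rpow_add (spectrum_pos hA hx)]; norm_num]
  exact cfc_const_one ℝ A

lemma matPow_mul_neg {A : Matrix n n ℂ} (hA : A.PosDef) :
    matPow A (1/2) * matPow A (-(1/2)) = 1 := by
  have hsa : IsSelfAdjoint A := hA.1
  rw [matPow, matPow, ← cfc_mul _ _ A (contOn_spectrum _ A) (contOn_spectrum _ A)]
  rw [cfc_congr (g := fun _ => (1:ℝ)) fun x hx => by
    rw [← Real.rpow_add (spectrum_pos hA hx)]; norm_num]
  exact cfc_const_one ℝ A

omit [DecidableEq n] in
lemma trace_conjTranspose_mul_self_re (Y : Matrix n n ℂ) :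
    (Yᴴ * Y).trace = ((∑ i, ∑ j, Complex.normSq (Y j i) : ℝ) : ℂ) := by
  rw [Matrix.trace]
  push_cast
  congr 1; funext i
  rw [Matrix.diag_apply, Matrix.mul_apply]
  congr 1; funext j
  rw [conjTranspose_apply, Complex.star_def, ← Complex.normSq_eq_conj_mul_self]

omit [DecidableEq n] in
lemma eq_zero_of_trace_conjTranspose_mul_self (Y : Matrix n n ℂ)
    (h : (Yᴴ * Y).trace = 0) : Y = 0 := by
  rw [trace_conjTranspose_mul_self_re, Complex.ofReal_eq_zero] at h
  have h2 := (Finset.sum_eq_zero_iff_of_nonneg (fun i _ =>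
    Finset.sum_nonneg fun j _ => Complex.normSq_nonneg (Y j i))).mp h
  ext i j
  have h3 := (Finset.sum_eq_zero_iff_of_nonneg (fun k _ =>
    Complex.normSq_nonneg (Y k j))).mp (h2 j (Finset.mem_univ j)) i (Finset.mem_univ i)
  simpa [Complex.normSq_eq_zero] using h3

lemma mul_eq_zero_cancel {W H : Matrix n n ℂ} (hW : W.PosDef) (h : W * H = 0) : H = 0 := by
  have hdet : IsUnit W.det := isUnit_iff_ne_zero.mpr (ne_of_gt hW.det_pos)
  calc H = (W⁻¹ * W) * H := by rw [Matrix.nonsing_inv_mul W hdet, one_mul]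
  _ = W⁻¹ * (W * H) := by rw [mul_assoc]
  _ = 0 := by rw [h, mul_zero]

/-- Injectivity of the Sylvester-type map `H ↦ P*H + H*P` for positive definite `P`. -/
lemma sylvester_inj {P : Matrix n n ℂ} (hP : P.PosDef) {H : Matrix n n ℂ}
    (h : P * H + H * P = 0) : H = 0 := by
  set W := hP.posSemidef.sqrt with hWdef
  have hWd : W.PosDef := sqrt_posDef hP
  have hW : W * W = P := hP.posSemidef.sqrt_mul_self
  have hWh : Wᴴ = W := hWd.1
  have t1 : (Hᴴ * (P * H)).trace = ((W * H)ᴴ * (W * H)).trace := by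
    rw [conjTranspose_mul, hWh]
    congr 1
    rw [← hW]
    simp only [mul_assoc]
  have t2 : (Hᴴ * (H * P)).trace = ((H * W)ᴴ * (H * W)).trace := by
    have e : (H * W)ᴴ * (H * W) = W * (Hᴴ * (H * W)) := by
      rw [conjTranspose_mul, hWh]
      simp only [mul_assoc]
    rw [e, trace_mul_comm W (Hᴴ * (H * W))]
    congr 1
    rw [← hW]
    simp only [mul_assoc]
  have hzero : (Hᴴ * (P * H)).trace + (Hᴴ * (H * P)).trace = 0 := by
    rw [← trace_add, ← mul_add, h, mul_zero, trace_zero]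
  rw [t1, t2, trace_conjTranspose_mul_self_re, trace_conjTranspose_mul_self_re] at hzero
  rw [← Complex.ofReal_add, Complex.ofReal_eq_zero] at hzero
  have ha : (0:ℝ) ≤ ∑ i, ∑ j, Complex.normSq ((W * H) j i) :=
    Finset.sum_nonneg fun i _ => Finset.sum_nonneg fun j _ => Complex.normSq_nonneg _
  have hb : (0:ℝ) ≤ ∑ i, ∑ j, Complex.normSq ((H * W) j i) :=
    Finset.sum_nonneg fun i _ => Finset.sum_nonneg fun j _ => Complex.normSq_nonneg _
  have haz : ∑ i, ∑ j, Complex.normSq ((W * H) j i) = 0 := by linarith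
  have hWH : W * H = 0 := by
    apply eq_zero_of_trace_conjTranspose_mul_self
    rw [trace_conjTranspose_mul_self_re, haz, Complex.ofReal_zero]
  exact mul_eq_zero_cancel hWd hWH

section FrobNorm

attribute [local instance] Matrix.frobeniusNormedAddCommGroup

omit [DecidableEq n] in
lemma frobenius_sq (C : Matrix n n ℂ) : ‖C‖ ^ 2 = ∑ i, ∑ j, ‖C i j‖ ^ 2 := by
  rw [Matrix.frobenius_norm_def]
  rw [← Real.rpow_natCast _ 2, ← Real.rpow_mul (by positivity)]
  norm_num [Real.rpow_two]

omit [DecidableEq n] in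
lemma qf_upper (C : Matrix n n ℂ) (x : n → ℂ) :
    |(star x ⬝ᵥ C *ᵥ x).re| ≤ ‖C‖ * (star x ⬝ᵥ x).re := by
  have habs : |(star x ⬝ᵥ C *ᵥ x).re| ≤ ∑ i, ∑ j, ‖C i j‖ * (‖x i‖ * ‖x j‖) := by
    calc |(star x ⬝ᵥ C *ᵥ x).re| ≤ ‖star x ⬝ᵥ C *ᵥ x‖ := Complex.abs_re_le_norm _
    _ ≤ ∑ i, ‖(star x) i * (C *ᵥ x) i‖ := by
        rw [dotProduct]; exact norm_sum_le _ _
    _ ≤ ∑ i, ∑ j, ‖C i j‖ * (‖x i‖ * ‖x j‖) := by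
        refine Finset.sum_le_sum fun i _ => ?_
        rw [norm_mul, mulVec, dotProduct, Pi.star_apply, Complex.star_def, Complex.norm_conj]
        calc ‖x i‖ * ‖∑ j, C i j * x j‖
            ≤ ‖x i‖ * ∑ j, ‖C i j * x j‖ :=
              mul_le_mul_of_nonneg_left (norm_sum_le _ _) (norm_nonneg _)
          _ = ∑ j, ‖C i j‖ * (‖x i‖ * ‖x j‖) := by
              rw [Finset.mul_sum]; congr 1; funext j
              rw [show ‖C i j * x j‖ = ‖C i j‖ * ‖x j‖ from
                norm_mul _ _]; ring
  refine habs.trans ?_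
  have hCS := Finset.sum_mul_sq_le_sq_mul_sq (Finset.univ : Finset (n × n))
      (fun p => ‖C p.1 p.2‖) (fun p => ‖x p.1‖ * ‖x p.2‖)
  have hL : ∑ i, ∑ j, ‖C i j‖ * (‖x i‖ * ‖x j‖)
      = ∑ p : n × n, ‖C p.1 p.2‖ * (‖x p.1‖ * ‖x p.2‖) := by
    rw [Fintype.sum_prod_type]
  have hsq : ∑ p : n × n, (‖x p.1‖ * ‖x p.2‖) ^ 2
      = ((star x ⬝ᵥ x).re) ^ 2 := by
    rw [self_dot_re, sq, Finset.sum_mul_sum, Fintype.sum_prod_type]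
    congr 1; funext i; congr 1; funext j
    rw [mul_pow, Complex.sq_norm, Complex.sq_norm]
  have hC2 : ∑ p : n × n, ‖C p.1 p.2‖ ^ 2 = ‖C‖ ^ 2 := by
    rw [frobenius_sq, Fintype.sum_prod_type]
  rw [hL]
  have hnn : (0:ℝ) ≤ ∑ p : n × n, ‖C p.1 p.2‖ * (‖x p.1‖ * ‖x p.2‖) := by
    refine Finset.sum_nonneg fun p _ => by positivity
  have hrhsnn : (0:ℝ) ≤ ‖C‖ * (star x ⬝ᵥ x).re := by
    have h3 : (0:ℝ) ≤ (star x ⬝ᵥ x).re := by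
      rw [self_dot_re]; exact Finset.sum_nonneg fun _ _ => Complex.normSq_nonneg _
    positivity
  have h2 : (∑ p : n × n, ‖C p.1 p.2‖ * (‖x p.1‖ * ‖x p.2‖)) ^ 2
      ≤ (‖C‖ * (star x ⬝ᵥ x).re) ^ 2 := by
    calc _ ≤ (∑ p : n × n, ‖C p.1 p.2‖ ^ 2) * ∑ p : n × n, (‖x p.1‖ * ‖x p.2‖) ^ 2 := hCS
    _ = (‖C‖ * (star x ⬝ᵥ x).re) ^ 2 := by rw [hsq, hC2, mul_pow]
  exact (pow_le_pow_iff_left₀ hnn hrhsnn two_ne_zero).mp h2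

omit [DecidableEq n] in
lemma posdef_of_close {P X : Matrix n n ℂ} (hX : X.IsHermitian) {c : ℝ}
    (hc : ∀ x : n → ℂ, c * (star x ⬝ᵥ x).re ≤ (star x ⬝ᵥ P *ᵥ x).re)
    (h : ‖X - P‖ < c) : X.PosDef := by
  refine Matrix.PosDef.of_dotProduct_mulVec_pos hX fun x hx => ?_
  have hS : 0 < (star x ⬝ᵥ x).re := by
    rw [self_dot_re]
    have h1 : ∀ i, (0:ℝ) ≤ Complex.normSq (x i) := fun i => Complex.normSq_nonneg _
    rcases Function.ne_iff.mp hx with ⟨i, hi⟩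
    exact Finset.sum_pos' (fun i _ => h1 i) ⟨i, Finset.mem_univ i,
      by simpa [Complex.normSq_eq_zero] using (Complex.normSq_pos.mpr hi)⟩
  have hre : 0 < (star x ⬝ᵥ X *ᵥ x).re := by
    have hd : (star x ⬝ᵥ X *ᵥ x).re
        = (star x ⬝ᵥ P *ᵥ x).re + (star x ⬝ᵥ (X - P) *ᵥ x).re := by
      rw [sub_mulVec, dotProduct_sub, Complex.sub_re]; ring
    have h1 := hc x
    have h2 : -(‖X - P‖ * (star x ⬝ᵥ x).re) ≤ (star x ⬝ᵥ (X - P) *ᵥ x).re :=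
      neg_le_of_abs_le (qf_upper (X - P) x)
    have h4 : ‖X - P‖ * (star x ⬝ᵥ x).re < c * (star x ⬝ᵥ x).re :=
      mul_lt_mul_of_pos_right h hS
    linarith
  rw [herm_qf_real hX x]
  exact Complex.zero_lt_real.mpr hre

end FrobNorm

end Aux

set_option maxHeartbeats 1000000 in
/-- The derivative of the fidelity in its first argument:
for positive definite `ρ, σ` and Hermitian `M`, the function
`t ↦ tr((σ^{1/2}(ρ+tM)σ^{1/2})^{1/2})` is differentiable at `t = 0` with derivative
`(1/2)·tr(σ^{1/2}(σ^{1/2}ρσ^{1/2})^{-1/2}σ^{1/2}·M)`. -/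
theorem fidelity_first_arg_deriv
    {n : Type*} [Fintype n] [DecidableEq n] [Nonempty n]
    (ρ σ M : Matrix n n ℂ) (hρ : ρ.PosDef) (hσ : σ.PosDef) (hM : M.IsHermitian) :
    HasDerivAt
      (fun t : ℝ =>
        ((matPow (matPow σ (1/2) * (ρ + t • M) * matPow σ (1/2)) (1/2)).trace).re)
      ((1/2) *
        ((matPow σ (1/2) * matPow (matPow σ (1/2) * ρ * matPow σ (1/2)) (-(1/2))
          * matPow σ (1/2) * M).trace).re)
      0 := by
  classical
  letI : NormedAddCommGroup (Matrix n n ℂ) := Matrix.frobeniusNormedAddCommGroup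
  letI : NormedRing (Matrix n n ℂ) := Matrix.frobeniusNormedRing
  letI : NormedAlgebra ℝ (Matrix n n ℂ) := Matrix.frobeniusNormedAlgebra
  haveI : FiniteDimensional ℝ (Matrix n n ℂ) := Module.Finite.trans ℂ (Matrix n n ℂ)
  set S : Matrix n n ℂ := matPow σ (1/2) with hSdef
  have hSd : S.PosDef := by
    rw [hSdef, matPow_eq_sqrt hσ.posSemidef]; exact sqrt_posDef hσ
  set A₀ : Matrix n n ℂ := S * ρ * S with hA₀def
  have hA₀d : A₀.PosDef := posdef_conj hSd hρ
  set B : Matrix n n ℂ := S * M * S with hBdef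
  have hBh : B.IsHermitian := by
    have := isHermitian_conjTranspose_mul_mul S hM
    rwa [hSd.1.eq] at this
  set P : Matrix n n ℂ := hA₀d.posSemidef.sqrt with hPdef
  have hPd : P.PosDef := sqrt_posDef hA₀d
  have hPsq : P * P = A₀ := hA₀d.posSemidef.sqrt_mul_self
  have hPmat : matPow A₀ (1/2) = P := matPow_eq_sqrt hA₀d.posSemidef
  -- the Sylvester map as a continuous linear equivalence
  let Lmap : Matrix n n ℂ →ₗ[ℝ] Matrix n n ℂ :=
    { toFun := fun H => P * H + H * P
      map_add' := fun H₁ H₂ => by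
        simp only [Matrix.mul_add, Matrix.add_mul]; abel
      map_smul' := fun c H => by
        simp only [Matrix.mul_smul, Matrix.smul_mul, RingHom.id_apply, smul_add] }
  have hLinj : Function.Injective Lmap := by
    intro H₁ H₂ h12
    have h0 : P * (H₁ - H₂) + (H₁ - H₂) * P = 0 := by
      simp only [Matrix.mul_sub, Matrix.sub_mul]
      have : P * H₁ + H₁ * P = P * H₂ + H₂ * P := h12
      rw [sub_add_sub_comm, this, sub_self]
    have := sylvester_inj hPd h0
    exact sub_eq_zero.mp this
  have hLsurj : Function.Surjective Lmap :=
    LinearMap.injective_iff_surjective.mp hLinj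
  let Leq : Matrix n n ℂ ≃ₗ[ℝ] Matrix n n ℂ := LinearEquiv.ofBijective Lmap ⟨hLinj, hLsurj⟩
  let L : Matrix n n ℂ ≃L[ℝ] Matrix n n ℂ := Leq.toContinuousLinearEquiv
  -- the squaring map and its strict derivative at P
  have hsq_deriv : HasStrictFDerivAt (fun X : Matrix n n ℂ => X * X) (L : Matrix n n ℂ →L[ℝ] Matrix n n ℂ) P := by
    have h := (hasStrictFDerivAt_id (𝕜 := ℝ) P).mul' (hasStrictFDerivAt_id P)
    have heq : (L : Matrix n n ℂ →L[ℝ] Matrix n n ℂ)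
        = P • ContinuousLinearMap.id ℝ (Matrix n n ℂ) + (ContinuousLinearMap.id ℝ (Matrix n n ℂ)).smulRight P := by
      refine ContinuousLinearMap.ext fun H => ?_
      show Lmap H = _
      simp [Lmap, smul_eq_mul]
    rw [heq]
    exact h
  set g : Matrix n n ℂ → Matrix n n ℂ := hsq_deriv.localInverse _ _ _ with hgdef
  have hgP : g A₀ = P := by
    rw [hgdef, ← hPsq]
    exact hsq_deriv.localInverse_apply_image
  have hg_deriv : HasStrictFDerivAt g (L.symm : Matrix n n ℂ →L[ℝ] Matrix n n ℂ) A₀ := by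
    have := hsq_deriv.to_localInverse
    rwa [show P * P = A₀ from hPsq] at this
  -- the path t ↦ A₀ + t • B
  have hk_deriv : HasDerivAt (fun t : ℝ => A₀ + t • B) B 0 := by
    have h1 : HasDerivAt (fun t : ℝ => t • B) ((1:ℝ) • B) 0 :=
      (hasDerivAt_id (0:ℝ)).smul_const B
    rw [one_smul] at h1
    exact h1.const_add A₀
  have hk0 : A₀ + (0:ℝ) • B = A₀ := by simp
  have hgk : HasDerivAt (fun t : ℝ => g (A₀ + t • B)) (L.symm B) 0 := by
    have := hg_deriv.hasFDerivAt
    rw [← hk0] at this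
    exact this.comp_hasDerivAt 0 hk_deriv
  set Y : Matrix n n ℂ := L.symm B with hYdef
  have hLY : P * Y + Y * P = B := by
    have := L.apply_symm_apply B
    rw [← hYdef] at this
    exact this
  -- the trace ∘ re functional
  let ℓ : Matrix n n ℂ →L[ℝ] ℝ := LinearMap.toContinuousLinearMap
    (Complex.reLm.comp ((Matrix.traceLinearMap n ℝ ℂ).restrictScalars ℝ))
  have hℓ : ∀ X : Matrix n n ℂ, ℓ X = X.trace.re := fun X => rfl
  have hfinal0 : HasDerivAt (fun t : ℝ => ℓ (g (A₀ + t • B))) (ℓ Y) 0 :=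
    ℓ.hasFDerivAt.comp_hasDerivAt 0 hgk
  -- eventual equality with the target function
  obtain ⟨cA, hcA0, hcA⟩ := posdef_lower hA₀d
  obtain ⟨cP, hcP0, hcP⟩ := posdef_lower hPd
  obtain ⟨ε, hε0, hball⟩ := Metric.eventually_nhds_iff_ball.mp
    (hsq_deriv.eventually_left_inverse)
  have hkherm : ∀ t : ℝ, (A₀ + t • B).IsHermitian := by
    intro t
    apply hA₀d.1.add
    show (t • B)ᴴ = t • B
    rw [conjTranspose_smul, hBh.eq, star_trivial]
  have hkcont : ContinuousAt (fun t : ℝ => A₀ + t • B) 0 := by fun_prop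
  have hkcont' : Filter.Tendsto (fun t : ℝ => A₀ + t • B) (nhds 0) (nhds A₀) := by
    have := hkcont.tendsto
    rwa [hk0] at this
  have hgcont : ContinuousAt g A₀ := by
    have := hsq_deriv.localInverse_continuousAt
    rwa [show P * P = A₀ from hPsq] at this
  have hgkcont : Filter.Tendsto (fun t : ℝ => g (A₀ + t • B)) (nhds 0) (nhds P) := by
    have := (hgcont.tendsto.comp hkcont')
    rwa [hgP] at this
  set ε' := min ε cP with hε'def
  have hε'0 : 0 < ε' := lt_min hε0 hcP0
  have ev1 : ∀ᶠ t : ℝ in nhds 0, g (A₀ + t • B) ∈ Metric.ball P ε' :=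
    hgkcont (Metric.ball_mem_nhds P hε'0)
  have ev2 : ∀ᶠ t : ℝ in nhds 0, g (A₀ + t • B) * g (A₀ + t • B) = A₀ + t • B := by
    have h := hsq_deriv.eventually_right_inverse
    rw [show P * P = A₀ from hPsq] at h
    exact hkcont'.eventually h
  have ev3 : ∀ᶠ t : ℝ in nhds 0, (A₀ + t • B) ∈ Metric.ball A₀ cA :=
    hkcont' (Metric.ball_mem_nhds A₀ hcA0)
  have evEq : ∀ᶠ t : ℝ in nhds 0,
      (fun t : ℝ =>
        ((matPow (matPow σ (1/2) * (ρ + t • M) * matPow σ (1/2)) (1/2)).trace).re) t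
      = ℓ (g (A₀ + t • B)) := by
    filter_upwards [ev1, ev2, ev3] with t h1 h2 h3
    have hdist : S * (ρ + t • M) * S = A₀ + t • B := by
      rw [Matrix.mul_add, Matrix.add_mul, hA₀def, hBdef, Matrix.mul_smul, Matrix.smul_mul]
    set X : Matrix n n ℂ := g (A₀ + t • B) with hXdef
    have hXball : ‖X - P‖ < ε' := by
      have := Metric.mem_ball.mp h1
      rwa [dist_eq_norm] at this
    have hXli : g (X * X) = X := hball _ (by
      rw [Metric.mem_ball, dist_eq_norm]
      exact lt_of_lt_of_le hXball (min_le_left _ _))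
    have hXHball : ‖Xᴴ - P‖ < ε' := by
      have : Xᴴ - P = (X - P)ᴴ := by rw [conjTranspose_sub, hPd.1.eq]
      rw [this, Matrix.frobenius_norm_conjTranspose]
      exact hXball
    have hXHli : g (Xᴴ * Xᴴ) = Xᴴ := hball _ (by
      rw [Metric.mem_ball, dist_eq_norm]
      exact lt_of_lt_of_le hXHball (min_le_left _ _))
    have hXherm : X.IsHermitian := by
      show Xᴴ = X
      have hXX : Xᴴ * Xᴴ = X * X := by
        rw [← conjTranspose_mul, h2, (hkherm t).eq, ← h2]
      rw [← hXHli, hXX, hXli]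
    have hXd : X.PosDef := by
      refine posdef_of_close hXherm hcP ?_
      exact lt_of_lt_of_le hXball (min_le_right _ _)
    have hAtd : (A₀ + t • B).PosDef := by
      refine posdef_of_close (hkherm t) hcA ?_
      have := Metric.mem_ball.mp h3
      rwa [dist_eq_norm] at this
    have hXsqrt : X = hAtd.posSemidef.sqrt := by
      refine hXd.posSemidef.eq_sqrt_of_sq_eq hAtd.posSemidef ?_
      rw [pow_two]; exact h2
    rw [hdist, matPow_eq_sqrt hAtd.posSemidef, ← hXsqrt, hℓ]
  have hmain : HasDerivAt
      (fun t : ℝ =>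
        ((matPow (matPow σ (1/2) * (ρ + t • M) * matPow σ (1/2)) (1/2)).trace).re)
      (ℓ Y) 0 := hfinal0.congr_of_eventuallyEq evEq
  -- identify the derivative value
  have hQP : matPow A₀ (-(1/2)) * P = 1 := by rw [← hPmat]; exact matPow_neg_mul hA₀d
  have hPQ : P * matPow A₀ (-(1/2)) = 1 := by rw [← hPmat]; exact matPow_mul_neg hA₀d
  set Q : Matrix n n ℂ := matPow A₀ (-(1/2)) with hQdef
  have htr : (S * Q * S * M).trace = 2 * Y.trace := by
    have p1 : (Q * (P * Y)).trace = Y.trace := by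
      rw [← mul_assoc, hQP, one_mul]
    have p2 : (Q * (Y * P)).trace = Y.trace := by
      rw [← mul_assoc, trace_mul_comm, ← mul_assoc, hPQ, one_mul]
    calc (S * Q * S * M).trace
        = (S * (Q * S * M)).trace := by rw [show S * Q * S * M = S * (Q * S * M) by
            simp only [mul_assoc]]
      _ = ((Q * S * M) * S).trace := trace_mul_comm _ _
      _ = (Q * B).trace := by rw [hBdef]; simp only [mul_assoc]
      _ = (Q * (P * Y) + Q * (Y * P)).trace := by rw [← hLY, mul_add]
      _ = 2 * Y.trace := by rw [trace_add, p1, p2]; ring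
  have hval : (1/2 : ℝ) * ((S * Q * S * M).trace).re = ℓ Y := by
    rw [htr, hℓ, Complex.mul_re]
    norm_num
    ring
  rw [hval]
  exact hmain
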